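/- Let α = (√5 - 1)/2, g(x) = log(2 - 2cos(2πx)), S_k(α) = ∑_{j=1}^{k} g(jα), and let F_n be the Fibonacci numbers. Then there exists a constant C > 0 such that |S_{F_n - 1}(α)| ≤ C log F_n for all n ≥ 3. -/

import Mathlib

open Real Finset

lemma abs_one_sub_exp (θ : ℝ) (h0 : 0 ≤ θ) (h1 : θ ≤ 2 * π) :
    ‖1 - Complex.exp (θ * Complex.I)‖ = 2 * Real.sin (θ / 2) := by
  have hs : 0 ≤ Real.sin (θ / 2) := Real.sin_nonneg_of_nonneg_of_le_pi (by linarith) (by linarith)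
  have hsq : (‖1 - Complex.exp (θ * Complex.I)‖)^2 = (2 * Real.sin (θ / 2))^2 := by
    rw [Complex.sq_norm, Complex.normSq_apply]
    simp [Complex.exp_mul_I, Complex.cos_ofReal_re, Complex.sin_ofReal_re]
    have h2 : Real.sin (θ/2) ^ 2 = 1/2 - Real.cos (2 * (θ/2)) / 2 := Real.sin_sq_eq_half_sub _
    rw [show 2 * (θ/2) = θ by ring] at h2
    nlinarith [Real.sin_sq_add_cos_sq θ]
  nlinarith [norm_nonneg (1 - Complex.exp (θ * Complex.I))]

lemma prod_two_sin (m : ℕ) :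
    ∏ r ∈ Finset.Icc 1 m, (2 * Real.sin (π * r / (m + 1))) = (m + 1 : ℝ) := by
  have hq : (m + 1 : ℕ) ≠ 0 := Nat.succ_ne_zero m
  have hprim := Complex.isPrimitiveRoot_exp (m + 1) hq
  have hprod := hprim.prod_one_sub_pow_eq_order
  have habs := congrArg (‖·‖) hprod
  rw [norm_prod] at habs
  push_cast at habs
  have key : ∀ k ∈ Finset.range m,
      ‖1 - Complex.exp (2 * ↑π * Complex.I / (↑m + 1)) ^ (k + 1)‖
        = 2 * Real.sin (π * (k + 1) / (m + 1)) := by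
    intro k hk
    rw [← Complex.exp_nat_mul]
    have hθeq : (↑(k+1) : ℂ) * (2 * ↑π * Complex.I / (↑m + 1))
        = ((2 * π * (k+1) / (m+1) : ℝ) : ℂ) * Complex.I := by
      push_cast; field_simp
    have hk' : (k : ℝ) + 1 ≤ m + 1 := by
      have := Finset.mem_range.mp hk
      exact_mod_cast Nat.succ_le_succ this.le
    rw [hθeq, abs_one_sub_exp _ (by positivity)
      (by rw [div_le_iff₀ (by positivity)]; nlinarith [Real.pi_pos]),
      show 2 * π * ((k:ℝ)+1) / ((m:ℝ)+1) / 2 = π * ((k:ℝ)+1) / ((m:ℝ)+1) by ring]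
  rw [Finset.prod_congr rfl key] at habs
  rw [show ‖((↑m + 1 : ℂ))‖ = (m + 1 : ℝ) by
    rw [show ((m : ℂ) + 1) = ((m + 1 : ℝ) : ℂ) by push_cast; ring, Complex.norm_real, Real.norm_eq_abs,
      abs_of_pos (by positivity)]] at habs
  rw [show Finset.Icc 1 m = Finset.image (fun k => k + 1) (Finset.range m) by
    ext a
    simp only [Finset.mem_Icc, Finset.mem_image, Finset.mem_range]
    constructor
    · intro h; exact ⟨a - 1, by omega, by omega⟩
    · rintro ⟨k, hk, rfl⟩; omega]
  rw [Finset.prod_image (by intro a _ b _ h; simp only at h; omega)]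
  refine Eq.trans (Finset.prod_congr rfl fun k _ => ?_) habs
  push_cast; ring_nf

-- log comparison
lemma log_close {a b c : ℝ} (hb : 0 < b) (h1 : |a - b| ≤ c) (h2 : 5 * c ≤ 4 * b) :
    |Real.log a - Real.log b| ≤ 5 * (c / b) := by
  have hc : 0 ≤ c := le_trans (abs_nonneg _) h1
  have ha : b / 5 ≤ a := by
    have := abs_le.mp h1
    linarith
  have ha0 : 0 < a := lt_of_lt_of_le (by linarith) ha
  have hub : Real.log a - Real.log b ≤ c / b := by
    rw [← Real.log_div ha0.ne' hb.ne']
    calc Real.log (a / b) ≤ a / b - 1 := Real.log_le_sub_one_of_pos (by positivity)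
    _ ≤ c / b := by
        rw [div_sub' hb.ne', div_le_div_iff_of_pos_right hb]
        have := abs_le.mp h1; linarith
  have hlb : Real.log b - Real.log a ≤ 5 * (c / b) := by
    rw [← Real.log_div hb.ne' ha0.ne']
    calc Real.log (b / a) ≤ b / a - 1 := Real.log_le_sub_one_of_pos (by positivity)
    _ = (b - a) / a := by field_simp
    _ ≤ c / a := by
        gcongr
        have := abs_le.mp h1; linarith
    _ ≤ c / (b / 5) := by
        apply div_le_div_of_nonneg_left hc (by positivity) ha
    _ = 5 * (c / b) := by field_simp
  rw [abs_le]
  constructor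
  · linarith
  · calc Real.log a - Real.log b ≤ c / b := hub
      _ ≤ 5 * (c / b) := by nlinarith [div_nonneg hc hb.le]

-- harmonic sum bound
lemma harmonic_le (m : ℕ) : ∑ r ∈ Finset.Icc 1 m, (1 : ℝ) / r ≤ 1 + Real.log m := by
  induction m with
  | zero => simp
  | succ m ih =>
    rcases Nat.eq_zero_or_pos m with rfl | hm
    · simp
    rw [Finset.sum_Icc_succ_top (by omega)]
    have hlog : Real.log m + 1 / (m + 1) ≤ Real.log (m + 1) := by
      have hm' : (0:ℝ) < m := by exact_mod_cast hm
      have := Real.log_le_sub_one_of_pos (x := (m : ℝ) / (m + 1)) (by positivity)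
      rw [Real.log_div hm'.ne' (by positivity)] at this
      have h2 : (m:ℝ) / (m+1) - 1 = -(1/(m+1)) := by field_simp; ring
      rw [h2] at this
      linarith
    push_cast
    linarith

-- sin lower bound on (0,1): sin(πx) ≥ 2 min(x, 1-x)
lemma two_min_le_sin {x : ℝ} (h0 : 0 ≤ x) (h1 : x ≤ 1) :
    2 * min x (1 - x) ≤ Real.sin (π * x) := by
  rcases le_total x (1/2) with h | h
  · rw [min_eq_left (by linarith)]
    have := Real.mul_le_sin (x := π * x) (by positivity) (by nlinarith [Real.pi_pos])
    calc 2 * x = 2 / π * (π * x) := by field_simp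
      _ ≤ Real.sin (π * x) := this
  · rw [min_eq_right (by linarith)]
    have h2 : Real.sin (π * x) = Real.sin (π * (1 - x)) := by
      rw [show π * x = π - π * (1-x) by ring, Real.sin_pi_sub]
    rw [h2]
    have := Real.mul_le_sin (x := π * (1 - x)) (by nlinarith [Real.pi_pos])
      (by nlinarith [Real.pi_pos])
    calc 2 * (1 - x) = 2 / π * (π * (1 - x)) := by field_simp
      _ ≤ Real.sin (π * (1 - x)) := this

-- |sin(π(N+x))| = sin(πx) for x real, N nat
lemma abs_sin_shift (N : ℕ) (x : ℝ) : |Real.sin (π * (N + x))| = |Real.sin (π * x)| := by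
  rw [show π * (N + x) = π * x + N * π by ring, Real.sin_add_nat_mul_pi, abs_mul,
    abs_pow, abs_neg, abs_one, one_pow, one_mul]

-- Lipschitz: |sin a - sin b| ≤ |a - b|
lemma sin_lip (a b : ℝ) : |Real.sin a - Real.sin b| ≤ |a - b| := by
  rw [Real.sin_sub_sin, abs_mul, abs_mul]
  have h1 : |Real.sin ((a-b)/2)| ≤ |(a-b)/2| := Real.abs_sin_le_abs
  have h2 : |Real.cos ((a+b)/2)| ≤ 1 := Real.abs_cos_le_one _
  have h3 : |(a-b)/2| = |a-b|/2 := by rw [abs_div]; norm_num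
  have h4 : |(2:ℝ)| = 2 := by norm_num
  rw [h4]
  nlinarith [abs_nonneg (Real.sin ((a-b)/2)), abs_nonneg ((a-b)/2), abs_nonneg (a-b),
    abs_nonneg (Real.cos ((a+b)/2))]

lemma mulmod_mem (q p : ℕ) (hq : 2 ≤ q) (hcop : Nat.Coprime p q) {j : ℕ}
    (hj : j ∈ Finset.Icc 1 (q-1)) : j * p % q ∈ Finset.Icc 1 (q - 1) := by
  simp only [Finset.mem_Icc] at hj ⊢
  have hlt : j * p % q < q := Nat.mod_lt _ (by omega)
  have hne : j * p % q ≠ 0 := by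
    intro h0
    have hdvd : q ∣ j * p := Nat.dvd_of_mod_eq_zero h0
    have hdj := (Nat.Coprime.dvd_of_dvd_mul_right (hcop.symm) hdvd)
    have := Nat.le_of_dvd (by omega) hdj
    omega
  omega

-- reflection sum
lemma sum_reflect (q : ℕ) (f : ℕ → ℝ) :
    ∑ r ∈ Finset.Icc 1 (q - 1), f (q - r) = ∑ r ∈ Finset.Icc 1 (q - 1), f r := by
  apply Finset.sum_nbij' (fun r => q - r) (fun r => q - r) <;>
    intro a ha <;> simp only [Finset.mem_Icc] at * <;> omega

-- multiplication-mod bijection sum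
lemma sum_mulmod (q p : ℕ) (hq : 2 ≤ q) (hcop : Nat.Coprime p q) (f : ℕ → ℝ) :
    ∑ j ∈ Finset.Icc 1 (q - 1), f (j * p % q) = ∑ r ∈ Finset.Icc 1 (q - 1), f r := by
  have hmem : ∀ j ∈ Finset.Icc 1 (q - 1), j * p % q ∈ Finset.Icc 1 (q - 1) :=
    fun j hj => mulmod_mem q p hq hcop hj
  have hinj : Set.InjOn (fun j => j * p % q) (Finset.Icc 1 (q - 1)) := by
    intro a ha b hb hab
    simp only [Finset.coe_Icc, Set.mem_Icc] at ha hb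
    simp only at hab
    have h1 : a * p ≡ b * p [MOD q] := by
      unfold Nat.ModEq; omega
    have h2 : a ≡ b [MOD q] := h1.cancel_right_of_coprime hcop.symm
    have : a % q = b % q := h2
    rw [Nat.mod_eq_of_lt (by omega), Nat.mod_eq_of_lt (by omega)] at this
    exact this
  have himg : Finset.image (fun j => j * p % q) (Finset.Icc 1 (q - 1)) = Finset.Icc 1 (q - 1) := by
    apply Finset.eq_of_subset_of_card_le
    · intro r hr
      obtain ⟨j, hj, rfl⟩ := Finset.mem_image.mp hr
      exact hmem j hj
    · rw [Finset.card_image_of_injOn hinj]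
  calc ∑ j ∈ Finset.Icc 1 (q-1), f (j * p % q)
      = ∑ r ∈ Finset.image (fun j => j * p % q) (Finset.Icc 1 (q-1)), f r :=
        (Finset.sum_image (fun a ha b hb h => hinj (by simpa using ha) (by simpa using hb) h)).symm
    _ = ∑ r ∈ Finset.Icc 1 (q-1), f r := by rw [himg]

lemma fib_golden (α : ℝ) (hsq : α^2 + α = 1) :
    ∀ n : ℕ, (Nat.fib (n+1) : ℝ) * α = Nat.fib n - (-α)^(n+1) := by
  have key : ∀ n : ℕ, ((Nat.fib (n+1) : ℝ) * α = Nat.fib n - (-α)^(n+1)) ∧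
      ((Nat.fib (n+2) : ℝ) * α = Nat.fib (n+1) - (-α)^(n+2)) := by
    intro n
    induction n with
    | zero => constructor <;> simp [Nat.fib] <;> nlinarith
    | succ k ih =>
      refine ⟨ih.2, ?_⟩
      have h1 := ih.1
      have h2 := ih.2
      have hfib : (Nat.fib (k+3) : ℝ) = Nat.fib (k+2) + Nat.fib (k+1) := by
        rw [show k+3 = (k+1)+2 by ring, Nat.fib_add_two]; push_cast; ring
      rw [hfib]
      have : (-α)^(k+3) = (-α)^(k+2) * (-α) := by ring
      rw [this, show (-α)^(k+2) = (-α)^(k+1) * (-α) by ring] at *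
      nlinarith [h1, h2]
  exact fun n => (key n).1
lemma fib_small (α : ℝ) (hsq : α^2 + α = 1) (hl : 0.617 < α) (hu : α < 0.62) :
    ∀ n : ℕ, 3 ≤ n → (Nat.fib n : ℝ) * α^n ≤ 1/2 := by
  have hα3 : α^3 = 2*α - 1 := by nlinarith
  have hα4 : α^4 = 2 - 3*α := by nlinarith
  have key : ∀ m : ℕ, ((Nat.fib (m+3) : ℝ) * α^(m+3) ≤ 1/2) ∧
      ((Nat.fib (m+4) : ℝ) * α^(m+4) ≤ 1/2) := by
    intro m
    induction m with
    | zero =>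
      constructor
      · show (Nat.fib 3 : ℝ) * α^3 ≤ 1/2
        rw [show Nat.fib 3 = 2 by rfl]; push_cast; nlinarith
      · show (Nat.fib 4 : ℝ) * α^4 ≤ 1/2
        rw [show Nat.fib 4 = 3 by rfl]; push_cast; nlinarith
    | succ k ih =>
      refine ⟨ih.2, ?_⟩
      have h1 := ih.1
      have h2 := ih.2
      have hfib : (Nat.fib (k+5) : ℝ) = Nat.fib (k+4) + Nat.fib (k+3) := by
        rw [show k+5 = (k+3)+2 by ring, Nat.fib_add_two]; push_cast; ring
      have hexp : α^(k+5) = α * α^(k+4) ∧ α^(k+4) = α * α^(k+3) := ⟨by ring, by ring⟩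
      have hp3 : (0:ℝ) ≤ (Nat.fib (k+3) : ℝ) * α^(k+3) := by positivity
      have hp4 : (0:ℝ) ≤ (Nat.fib (k+4) : ℝ) * α^(k+4) := by positivity
      rw [show k+1+4 = k+5 by ring, hfib, hexp.1]
      calc (↑(Nat.fib (k+4)) + ↑(Nat.fib (k+3))) * (α * α^(k+4))
          = α * ((Nat.fib (k+4):ℝ) * α^(k+4)) + α^2 * ((Nat.fib (k+3):ℝ) * α^(k+3)) := by
            rw [hexp.2]; ring
        _ ≤ α * (1/2) + α^2 * (1/2) := by nlinarith
        _ = 1/2 := by nlinarith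
  intro n hn
  obtain ⟨m, rfl⟩ : ∃ m, n = m + 3 := ⟨n - 3, by omega⟩
  exact (key m).1

set_option maxHeartbeats 1000000 in
lemma per_term (q p N r j : ℕ) (α δ : ℝ) (hq : 2 ≤ q)
    (hr1 : 1 ≤ r) (hr2 : r ≤ q - 1) (hj2 : j ≤ q - 1)
    (hdm : j * p = N * q + r)
    (hqα : (q:ℝ) * α = p + δ)
    (hδ : (q:ℝ) * |δ| ≤ 1/2) :
    |Real.log (2 - 2*Real.cos (2*π*((j:ℝ)*α))) - 2 * Real.log (2 * Real.sin (π * r / q))|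
      ≤ 8 * (1/(r:ℝ) + 1/((q:ℝ) - r)) := by
  have hQ : (0:ℝ) < q := by exact_mod_cast (by omega : 0 < q)
  have hQne : (q:ℝ) ≠ 0 := hQ.ne'
  have hrR1 : (1:ℝ) ≤ r := by exact_mod_cast hr1
  have hrR2 : (r:ℝ) ≤ q - 1 := by
    have h : (r:ℝ) ≤ ((q-1:ℕ):ℝ) := by exact_mod_cast hr2
    rw [Nat.cast_sub (by omega)] at h; simpa using h
  have hjR : (j:ℝ) ≤ q := by
    have h : (j:ℝ) ≤ ((q-1:ℕ):ℝ) := by exact_mod_cast hj2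
    rw [Nat.cast_sub (by omega)] at h; linarith
  have hjnn : (0:ℝ) ≤ j := Nat.cast_nonneg j
  set u : ℝ := j * δ / q with hu_def
  have hu : |u| ≤ 1 / (2 * q) := by
    rw [hu_def, abs_div, abs_of_pos hQ, abs_mul, abs_of_nonneg hjnn]
    rw [div_le_div_iff₀ (by positivity) (by positivity)]
    have h1 : (j:ℝ) * |δ| ≤ (q:ℝ) * |δ| :=
      mul_le_mul_of_nonneg_right (by linarith) (abs_nonneg _)
    nlinarith
  have huu := abs_le.mp hu
  set x : ℝ := r / q + u with hx_def
  have hrq1 : 1/(q:ℝ) ≤ r/q := by gcongr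
  have hrq2 : (r:ℝ)/q ≤ 1 - 1/q := by
    have h : (r:ℝ)/q ≤ ((q:ℝ)-1)/q := by gcongr
    have h2 : ((q:ℝ)-1)/q = 1 - 1/q := by field_simp
    linarith [h2 ▸ h]
  have hx0 : 1 / (2*(q:ℝ)) ≤ x := by
    have h2 : 1/(2*(q:ℝ)) = 1/q - 1/(2*q) := by field_simp; ring
    rw [hx_def, h2]; linarith
  have hx1 : x ≤ 1 - 1 / (2*(q:ℝ)) := by
    have h2 : 1 - 1/(2*(q:ℝ)) = (1 - 1/q) + 1/(2*q) := by field_simp; ring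
    rw [hx_def, h2]; linarith
  have hxpos : 0 < x := lt_of_lt_of_le (by positivity) hx0
  have hxlt1 : x < 1 := lt_of_le_of_lt hx1 (by nlinarith [one_div_pos.mpr (by positivity : (0:ℝ) < 2*(q:ℝ))])
  -- j α = N + x
  have hjα : (j:ℝ) * α = N + x := by
    have hc : ((j:ℝ)) * p = N * q + r := by exact_mod_cast congrArg (Nat.cast : ℕ → ℝ) hdm
    have h3 : (j:ℝ)*α*q = N*q + r + j*δ := by
      calc (j:ℝ)*α*q = (j:ℝ)*((q:ℝ)*α) := by ring
        _ = (j:ℝ)*((p:ℝ)+δ) := by rw [hqα]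
        _ = (j:ℝ)*p + j*δ := by ring
        _ = (N:ℝ)*q + r + j*δ := by rw [hc]
    have h4 : ((N:ℝ) + x)*q = (N:ℝ)*q + r + j*δ := by
      rw [hx_def, hu_def]; field_simp; ring
    exact mul_right_cancel₀ hQne (h3.trans h4.symm)
  -- sin positivity
  have hsinx : 0 < Real.sin (π * x) :=
    Real.sin_pos_of_pos_of_lt_pi (by positivity) (by nlinarith [Real.pi_pos])
  -- g value
  have hcos : 2 - 2*Real.cos (2*π*((j:ℝ)*α)) = (2*Real.sin (π*((j:ℝ)*α)))^2 := by
    have h := Real.sin_sq_eq_half_sub (π*((j:ℝ)*α))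
    rw [show 2*(π*((j:ℝ)*α)) = 2*π*((j:ℝ)*α) by ring] at h
    nlinarith [h]
  have habs2 : (2*Real.sin (π*((j:ℝ)*α)))^2 = (2*Real.sin (π*x))^2 := by
    have h := abs_sin_shift N x
    rw [← hjα] at h
    have := congrArg (fun t => (2*t)^2) h
    simp only [mul_pow, sq_abs] at this
    nlinarith [this]
  have hgval : Real.log (2 - 2*Real.cos (2*π*((j:ℝ)*α))) = 2 * Real.log (2*Real.sin (π*x)) := by
    rw [hcos, habs2, show ((2:ℝ)*Real.sin (π*x))^2 = (2*Real.sin (π*x))^(2:ℕ) by norm_num,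
      Real.log_pow]
    push_cast; ring
  -- b and bounds
  set b : ℝ := 2 * Real.sin (π * r / q) with hb_def
  set d : ℝ := min (r:ℝ) ((q:ℝ) - r) with hd_def
  have hd1 : 1 ≤ d := le_min hrR1 (by linarith)
  have hdpos : 0 < d := lt_of_lt_of_le one_pos hd1
  have hblow : 4 * d / q ≤ b := by
    have h := two_min_le_sin (x := (r:ℝ)/q) (by positivity) (by linarith)
    have hmin : min ((r:ℝ)/q) (1 - (r:ℝ)/q) = d / q := by
      rw [hd_def, show 1 - (r:ℝ)/q = ((q:ℝ) - r)/q by field_simp, ← min_div_div_right hQ.le]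
    rw [hmin] at h
    rw [hb_def, show π * (r:ℝ) / q = π * ((r:ℝ)/q) by ring]
    rw [show (4:ℝ) * d / q = 2 * (2 * (d/q)) by ring]
    linarith
  have hbpos : 0 < b := lt_of_lt_of_le (by positivity) hblow
  -- closeness
  have hclose : |2*Real.sin (π*x) - b| ≤ π / q := by
    rw [hb_def, show (2:ℝ)*Real.sin (π*x) - 2*Real.sin (π*r/q) = 2*(Real.sin (π*x) - Real.sin (π*r/q)) by ring,
      abs_mul, abs_of_pos (by norm_num : (0:ℝ) < 2)]
    have h := sin_lip (π*x) (π*(r:ℝ)/q)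
    have h2 : |π*x - π*(r:ℝ)/q| = π * |u| := by
      rw [hx_def, show π*((r:ℝ)/q + u) - π*(r:ℝ)/q = π * u by ring, abs_mul,
        abs_of_pos Real.pi_pos]
    rw [h2] at h
    have h3 : π * |u| ≤ π * (1/(2*q)) := mul_le_mul_of_nonneg_left hu Real.pi_pos.le
    calc 2 * |Real.sin (π*x) - Real.sin (π*(r:ℝ)/q)| ≤ 2 * (π * (1/(2*q))) := by linarith
      _ = π / q := by field_simp
  have hπ : π < 3.2 := by linarith [Real.pi_lt_d2]
  have h54 : 5 * (π/q) ≤ 4 * b := by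
    have h16 : (16:ℝ)/q ≤ 16*d/q := by gcongr; nlinarith
    have hb4 : 16*d/q ≤ 4*b := by
      have := mul_le_mul_of_nonneg_left hblow (by norm_num : (0:ℝ) ≤ 4)
      calc 16*d/(q:ℝ) = 4*(4*d/q) := by ring
        _ ≤ 4*b := this
    have h5 : 5*(π/(q:ℝ)) ≤ 16/q := by
      rw [show 5*(π/(q:ℝ)) = 5*π/q by ring, div_le_div_iff₀ hQ hQ]; nlinarith
    linarith
  have hlog := log_close hbpos hclose h54
  -- 5 * (c/b) ≤ 4/d
  have hfinal : 5 * ((π/q) / b) ≤ 4 / d := by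
    have h1 : (π/(q:ℝ)) / b ≤ (π/q) / (4*d/q) :=
      div_le_div_of_nonneg_left (by positivity) (by positivity) hblow
    have h2 : (π/(q:ℝ)) / (4*d/q) = π / (4*d) := by
      field_simp
    rw [h2] at h1
    have h3 : 5 * (π / (4*d)) ≤ 4 / d := by
      rw [show 5*(π/(4*d)) = 5*π/(4*d) by ring, div_le_div_iff₀ (by positivity) hdpos]
      nlinarith
    linarith
  have hsplit : 4 / d ≤ 4 * (1/(r:ℝ) + 1/((q:ℝ) - r)) := by
    have hpr : (0:ℝ) < r := lt_of_lt_of_le one_pos hrR1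
    have hpqr : (0:ℝ) < (q:ℝ) - r := by linarith
    have e1 : (0:ℝ) ≤ 1/((q:ℝ) - r) := by positivity
    have e2 : (0:ℝ) ≤ 1/(r:ℝ) := by positivity
    rcases le_total (r:ℝ) ((q:ℝ)-r) with h | h
    · rw [hd_def, min_eq_left h, show (4:ℝ)/(r:ℝ) = 4*(1/(r:ℝ)) by ring]
      linarith
    · rw [hd_def, min_eq_right h, show (4:ℝ)/((q:ℝ)-r) = 4*(1/((q:ℝ)-r)) by ring]
      linarith
  rw [hgval, show 2*Real.log (2*Real.sin (π*x)) - 2*Real.log (2*Real.sin (π*(r:ℝ)/q))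
      = 2*(Real.log (2*Real.sin (π*x)) - Real.log b) by rw [hb_def]; ring,
    abs_mul, abs_of_pos (by norm_num : (0:ℝ) < 2)]
  calc 2 * |Real.log (2*Real.sin (π*x)) - Real.log b| ≤ 2 * (5 * ((π/q)/b)) := by linarith
    _ ≤ 2 * (4/d) := by linarith
    _ ≤ 8 * (1/(r:ℝ) + 1/((q:ℝ) - r)) := by linarith

set_option maxHeartbeats 1000000 in
/-- For the golden mean `α = (√5 - 1)/2`, `g x = log (2 - 2 cos (2π x))` and the Birkhoff
sums `S k = ∑_{j=1}^{k} g (j α)`, there is a constant `C > 0` such that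
`|S (F n - 1)| ≤ C log (F n)` for all `n ≥ 3`, where `F n` are the Fibonacci numbers. -/
theorem birkhoff_sum_fib_sub_one_log_bound (α : ℝ) (hα : α = (Real.sqrt 5 - 1) / 2)
    (g : ℝ → ℝ) (hg : ∀ x, g x = Real.log (2 - 2 * Real.cos (2 * Real.pi * x)))
    (S : ℕ → ℝ) (hS : ∀ k, S k = ∑ j ∈ Finset.Icc 1 k, g (j * α)) :
    ∃ C > 0, ∀ n : ℕ, 3 ≤ n → |S (Nat.fib n - 1)| ≤ C * Real.log (Nat.fib n) := by
  have h5 : Real.sqrt 5 ^ 2 = 5 := Real.sq_sqrt (by norm_num)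
  have h5nn : 0 ≤ Real.sqrt 5 := Real.sqrt_nonneg 5
  have h5l : 2.234 < Real.sqrt 5 := by nlinarith
  have h5u : Real.sqrt 5 < 2.24 := by nlinarith
  have hsq : α^2 + α = 1 := by rw [hα]; nlinarith
  have hl : 0.617 < α := by rw [hα]; nlinarith
  have hu : α < 0.62 := by rw [hα]; nlinarith
  refine ⟨100, by norm_num, fun n hn => ?_⟩
  -- setup
  set q : ℕ := Nat.fib n with hq_def
  set p : ℕ := Nat.fib (n-1) with hp_def
  have hq2 : 2 ≤ q := by
    rw [hq_def]
    calc 2 = Nat.fib 3 := rfl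
      _ ≤ Nat.fib n := Nat.fib_mono hn
  have hQ : (0:ℝ) < q := by exact_mod_cast (by omega : 0 < q)
  have hQ2 : (2:ℝ) ≤ q := by exact_mod_cast hq2
  have hcop : Nat.Coprime p q := by
    rw [hp_def, hq_def, show n = (n-1)+1 by omega]
    exact Nat.fib_coprime_fib_succ (n-1)
  -- golden identity
  set δ : ℝ := -(-α)^n with hδ_def
  have hqα : (q:ℝ) * α = p + δ := by
    have := fib_golden α hsq (n-1)
    rw [show (n-1)+1 = n by omega] at this
    rw [hq_def, hp_def, hδ_def, this]; ring
  have hδ : (q:ℝ) * |δ| ≤ 1/2 := by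
    have habs : |δ| = α^n := by
      rw [hδ_def, abs_neg, abs_pow, abs_neg, abs_of_pos (by linarith : (0:ℝ) < α)]
    rw [habs, hq_def]
    exact fib_small α hsq hl hu n hn
  -- log q bounds
  have hlogq : (0.69:ℝ) < Real.log q := by
    have h2 : Real.log 2 ≤ Real.log q := by
      apply Real.log_le_log (by norm_num)
      exact_mod_cast hq2
    linarith [Real.log_two_gt_d9]
  -- B and W
  set B : ℕ → ℝ := fun r => Real.log (2 * Real.sin (π * r / q)) with hB_def
  set W : ℕ → ℝ := fun r => 8 * (1/(r:ℝ) + 1/((q:ℝ) - r)) with hW_def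
  -- per-term bound
  have key : ∀ j ∈ Finset.Icc 1 (q-1), |g ((j:ℝ) * α) - 2 * B (j * p % q)| ≤ W (j * p % q) := by
    intro j hj
    have hjm := Finset.mem_Icc.mp hj
    have hrm := Finset.mem_Icc.mp (mulmod_mem q p hq2 hcop hj)
    have hdm : j * p = (j * p / q) * q + (j * p % q) := by
      rw [Nat.div_add_mod']
    rw [hg, hB_def, hW_def]
    exact per_term q p (j*p/q) (j*p%q) j α δ hq2 hrm.1 hrm.2 hjm.2 hdm hqα hδ
  -- sum of B over r
  have hsumB : ∑ r ∈ Finset.Icc 1 (q-1), B r = Real.log q := by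
    have hpos : ∀ r ∈ Finset.Icc 1 (q-1), (0:ℝ) < 2 * Real.sin (π * r / q) := by
      intro r hr
      have hrm := Finset.mem_Icc.mp hr
      have hr1 : (1:ℝ) ≤ r := by exact_mod_cast hrm.1
      have hr2 : (r:ℝ) ≤ (q:ℝ) - 1 := by
        have : (r:ℝ) ≤ ((q-1:ℕ):ℝ) := by exact_mod_cast hrm.2
        rw [Nat.cast_sub (by omega)] at this; simpa using this
      have : 0 < Real.sin (π * r / q) := by
        apply Real.sin_pos_of_pos_of_lt_pi
        · positivity
        · rw [div_lt_iff₀ hQ]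
          nlinarith [Real.pi_pos]
      linarith
    have hprod := prod_two_sin (q-1)
    have hc : ((q-1:ℕ):ℝ) + 1 = (q:ℝ) := by
      rw [Nat.cast_sub (by omega)]; ring
    rw [hc] at hprod
    rw [← hprod, Real.log_prod (fun r hr => (hpos r hr).ne')]
  -- sum of W over r
  have hsumW : ∑ r ∈ Finset.Icc 1 (q-1), W r ≤ 16 * (1 + Real.log q) := by
    have hWsplit : ∑ r ∈ Finset.Icc 1 (q-1), W r
        = 8 * (∑ r ∈ Finset.Icc 1 (q-1), 1/(r:ℝ)) + 8 * (∑ r ∈ Finset.Icc 1 (q-1), 1/((q:ℝ) - r)) := by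
      rw [hW_def, Finset.mul_sum, Finset.mul_sum, ← Finset.sum_add_distrib]
      apply Finset.sum_congr rfl; intro r _; ring
    have hrefl : ∑ r ∈ Finset.Icc 1 (q-1), 1/((q:ℝ) - r) = ∑ r ∈ Finset.Icc 1 (q-1), 1/(r:ℝ) := by
      rw [← sum_reflect q (fun s => 1/(s:ℝ))]
      apply Finset.sum_congr rfl
      intro r hr
      have hrm := Finset.mem_Icc.mp hr
      rw [Nat.cast_sub (by omega)]
    have hharm : ∑ r ∈ Finset.Icc 1 (q-1), 1/(r:ℝ) ≤ 1 + Real.log q := by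
      calc ∑ r ∈ Finset.Icc 1 (q-1), 1/(r:ℝ) ≤ 1 + Real.log ((q-1:ℕ):ℝ) := harmonic_le (q-1)
        _ ≤ 1 + Real.log q := by
            have h1 : ((q-1:ℕ):ℝ) ≤ (q:ℝ) := by
              rw [Nat.cast_sub (by omega)]; linarith
            have h0 : (0:ℝ) < ((q-1:ℕ):ℝ) := by
              have : 1 ≤ q - 1 := by omega
              exact_mod_cast (by omega : 0 < q - 1)
            linarith [Real.log_le_log h0 h1]
    rw [hWsplit, hrefl]
    linarith
  -- assemble
  have hSval : S (q-1) = ∑ j ∈ Finset.Icc 1 (q-1), g ((j:ℝ) * α) := hS _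
  have hBsum : ∑ j ∈ Finset.Icc 1 (q-1), 2 * B (j * p % q) = 2 * Real.log q := by
    rw [← Finset.mul_sum, sum_mulmod q p hq2 hcop B, hsumB]
  have hWsum : ∑ j ∈ Finset.Icc 1 (q-1), W (j * p % q) = ∑ r ∈ Finset.Icc 1 (q-1), W r :=
    sum_mulmod q p hq2 hcop W
  have hdiff : |S (q-1) - 2 * Real.log q| ≤ 16 * (1 + Real.log q) := by
    rw [hSval, ← hBsum, ← Finset.sum_sub_distrib]
    calc |∑ j ∈ Finset.Icc 1 (q-1), (g ((j:ℝ)*α) - 2 * B (j * p % q))|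
        ≤ ∑ j ∈ Finset.Icc 1 (q-1), |g ((j:ℝ)*α) - 2 * B (j * p % q)| :=
          Finset.abs_sum_le_sum_abs _ _
      _ ≤ ∑ j ∈ Finset.Icc 1 (q-1), W (j * p % q) := Finset.sum_le_sum key
      _ = ∑ r ∈ Finset.Icc 1 (q-1), W r := hWsum
      _ ≤ 16 * (1 + Real.log q) := hsumW
  have habs := abs_le.mp hdiff
  rw [abs_le]
  constructor <;> nlinarith [hlogq, habs.1, habs.2]
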